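/- For every r ≥ 3 and 1 ≤ t ≤ r-2, in every spanning (r+t)-coloring of the edges of a complete r-uniform r-partite hypergraph, the vertex set can be covered by at most t+1 monochromatic components; i.e., cov(r, r+t) ≤ t+1. -/

import Mathlib

open Classical

variable {V : Type*}

/-- `e` is an edge of the complete `r`-uniform `r`-partite hypergraph with
partition `part`: it meets every class in exactly one vertex. -/
def IsPartiteEdge {r : ℕ} (part : V → Fin r) (e : Finset V) : Prop :=
  ∀ i : Fin r, (e.filter fun v => part v = i).card = 1

/-- `e` is an edge of the complete `r`-uniform `(r,ℓ)`-partite hypergraph: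
an `r`-set meeting every class in at most `ℓ` vertices. -/
def IsRLEdge {r : ℕ} (part : V → Fin r) (ℓ : ℕ) (e : Finset V) : Prop :=
  e.card = r ∧ ∀ i : Fin r, (e.filter fun v => part v = i).card ≤ ℓ

/-- An edge is friendly if it meets at most one class in exactly `ℓ` vertices. -/
def Friendly {r : ℕ} (part : V → Fin r) (ℓ : ℕ) (e : Finset V) : Prop :=
  (Finset.univ.filter fun i : Fin r => (e.filter fun v => part v = i).card = ℓ).card ≤ 1

/-- `u` and `v` lie in the same monochromatic component of color `c` of the
hypergraph with edge predicate `E` and edge coloring `χ`. -/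
def MonoConn {k : ℕ} (E : Finset V → Prop) (χ : Finset V → Fin k) (c : Fin k)
    (u v : V) : Prop :=
  Relation.ReflTransGen (fun a b => ∃ e : Finset V, E e ∧ χ e = c ∧ a ∈ e ∧ b ∈ e) u v

/-- The coloring `χ` is spanning: every vertex is incident with an edge of every color. -/
def Spanning {k : ℕ} (E : Finset V → Prop) (χ : Finset V → Fin k) : Prop :=
  ∀ v : V, ∀ c : Fin k, ∃ e : Finset V, E e ∧ χ e = c ∧ v ∈ e

/-- The vertex set can be covered by at most `m` monochromatic components. -/
def CoversBy {k : ℕ} (E : Finset V → Prop) (χ : Finset V → Fin k) (m : ℕ) : Prop :=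
  ∃ f : Fin m → Fin k × V, ∀ v : V, ∃ i : Fin m, MonoConn E χ (f i).1 (f i).2 v

/-- Hamming distance of the component vectors of two vertices: the number of
colors `c` for which they lie in different monochromatic components of color `c`. -/
noncomputable def HamDist {k : ℕ} (E : Finset V → Prop) (χ : Finset V → Fin k)
    (v w : V) : ℕ :=
  (Finset.univ.filter fun c : Fin k => ¬ MonoConn E χ c v w).card

/-! ### Auxiliary machinery -/

/-- The set of colors in which `u` and `v` lie in different monochromatic components. -/
noncomputable def badSet {k : ℕ} (E : Finset V → Prop) (χ : Finset V → Fin k)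
    (u v : V) : Finset (Fin k) :=
  Finset.univ.filter fun c : Fin k => ¬ MonoConn E χ c u v

lemma mem_badSet {k : ℕ} {E : Finset V → Prop} {χ : Finset V → Fin k} {u v : V} {c : Fin k} :
    c ∈ badSet E χ u v ↔ ¬ MonoConn E χ c u v := by
  simp [badSet]

lemma mono_of_not_mem_badSet {k : ℕ} {E : Finset V → Prop} {χ : Finset V → Fin k}
    {u v : V} {c : Fin k} (h : c ∉ badSet E χ u v) : MonoConn E χ c u v :=
  not_not.mp (fun hm => h (mem_badSet.mpr hm))

lemma mono_symm {k : ℕ} (E : Finset V → Prop) (χ : Finset V → Fin k) (c : Fin k) :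
    Symmetric (MonoConn E χ c) := by
  refine fun a b hab => Std.Symm.symm (self := @Relation.ReflTransGen.symmetric _ _ ⟨?_⟩) a b hab
  rintro a b ⟨e, h1, h2, h3, h4⟩
  exact ⟨e, h1, h2, h4, h3⟩

lemma mono_edge {k r : ℕ} {part : V → Fin r} {χ : Finset V → Fin k} {e : Finset V}
    {c : Fin k} {a b : V} (he : IsPartiteEdge part e) (hc : χ e = c)
    (ha : a ∈ e) (hb : b ∈ e) : MonoConn (IsPartiteEdge part) χ c a b :=
  Relation.ReflTransGen.single ⟨e, he, hc, ha, hb⟩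

lemma edge_mem_class {r : ℕ} {part : V → Fin r} {e : Finset V}
    (he : IsPartiteEdge part e) (i : Fin r) : ∃ y ∈ e, part y = i := by
  obtain ⟨y, hy⟩ := Finset.card_eq_one.mp (he i)
  have hy' : y ∈ e.filter fun v => part v = i := by rw [hy]; exact Finset.mem_singleton_self y
  rw [Finset.mem_filter] at hy'
  exact ⟨y, hy'.1, hy'.2⟩

lemma image_isPartiteEdge {r : ℕ} {part : V → Fin r} {q : Fin r → V}
    (hq : ∀ i, part (q i) = i) : IsPartiteEdge part (Finset.univ.image q) := by
  intro i
  have : (Finset.univ.image q).filter (fun v => part v = i) = {q i} := by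
    ext v
    simp only [Finset.mem_filter, Finset.mem_image, Finset.mem_univ, true_and,
      Finset.mem_singleton]
    constructor
    · rintro ⟨⟨j, rfl⟩, h2⟩
      rw [hq j] at h2
      rw [h2]
    · rintro rfl
      exact ⟨⟨i, rfl⟩, hq i⟩
  rw [this, Finset.card_singleton]

/-- The key "building" lemma: if we can maintain, for every color outside `S`, a
witness in the partial transversal that is not connected to `u` in that color, and
there are enough free classes to handle `S`, we reach a contradiction (the final
transversal edge must have *some* color, and all its vertices are connected to `u`
in that color). -/
lemma build {r t : ℕ} (part : V → Fin r) (χ : Finset V → Fin (r + t))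
    (hsplit : ∀ (c : Fin (r + t)) (u : V) (i : Fin r),
      ∃ y, part y = i ∧ ¬ MonoConn (IsPartiteEdge part) χ c u y)
    (u : V) :
    ∀ (n : ℕ) (S : Finset (Fin (r + t))) (P : Finset (Fin r)) (q : Fin r → V),
      S.card ≤ n → (∀ i, part (q i) = i) → q (part u) = u → part u ∈ P →
      (∀ c, c ∉ S → ∃ i ∈ P, ¬ MonoConn (IsPartiteEdge part) χ c u (q i)) →
      S.card + P.card ≤ r → False := by
  intro n
  induction n with
  | zero =>
    intro S P q hcard hq hqu hPu hwit _
    have hS : S = ∅ := Finset.card_eq_zero.mp (Nat.le_zero.mp hcard)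
    set e : Finset V := Finset.univ.image q with he_def
    have hE : IsPartiteEdge part e := image_isPartiteEdge hq
    obtain ⟨i, _, hmono⟩ := hwit (χ e) (by simp [hS])
    apply hmono
    exact mono_edge hE rfl (Finset.mem_image.mpr ⟨part u, Finset.mem_univ _, hqu⟩)
      (Finset.mem_image.mpr ⟨i, Finset.mem_univ _, rfl⟩)
  | succ n ih =>
    intro S P q hcard hq hqu hPu hwit hsum
    rcases Finset.eq_empty_or_nonempty S with rfl | ⟨c0, hc0⟩
    · exact ih ∅ P q (by simp) hq hqu hPu hwit (by simpa using hsum)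
    · have hS1 : 1 ≤ S.card := Finset.card_pos.mpr ⟨c0, hc0⟩
      have hPne : P ≠ Finset.univ := by
        intro h
        have hP : P.card = r := by rw [h, Finset.card_univ, Fintype.card_fin]
        omega
      obtain ⟨i0, -, hi0⟩ := Finset.exists_of_ssubset (Finset.ssubset_univ_iff.mpr hPne)
      obtain ⟨y, hyi, hymono⟩ := hsplit c0 u i0
      refine ih (S.erase c0) (insert i0 P) (Function.update q i0 y) ?_ ?_ ?_ ?_ ?_ ?_
      · rw [Finset.card_erase_of_mem hc0]; omega
      · intro i
        by_cases h : i = i0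
        · subst h; rw [Function.update_self]; exact hyi
        · rw [Function.update_of_ne h]; exact hq i
      · rw [Function.update_of_ne (fun h => hi0 (by rw [← h]; exact hPu))]; exact hqu
      · exact Finset.mem_insert_of_mem hPu
      · intro c hc
        by_cases h : c = c0
        · subst h
          exact ⟨i0, Finset.mem_insert_self _ _, by rw [Function.update_self]; exact hymono⟩
        · have hcS : c ∉ S := fun hcS => hc (Finset.mem_erase.mpr ⟨h, hcS⟩)
          obtain ⟨i, hiP, hm⟩ := hwit c hcS
          refine ⟨i, Finset.mem_insert_of_mem hiP, ?_⟩
          rw [Function.update_of_ne (fun hh => hi0 (by rw [← hh]; exact hiP))]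
          exact hm
      · rw [Finset.card_erase_of_mem hc0, Finset.card_insert_of_notMem hi0]
        omega

set_option maxHeartbeats 2000000 in
theorem stmt_7 [Fintype V] {r t : ℕ} (hr : 3 ≤ r) (ht1 : 1 ≤ t) (ht2 : t ≤ r - 2)
    (part : V → Fin r) (hne : ∀ i : Fin r, ∃ v, part v = i)
    (χ : Finset V → Fin (r + t)) (hs : Spanning (IsPartiteEdge part) χ) :
    CoversBy (IsPartiteEdge part) χ (t + 1) := by
  by_contra hcov
  set E := IsPartiteEdge part with hE_def
  have htr : t + 2 ≤ r := by omega
  have hcuniv : (Finset.univ : Finset (Fin (r + t))).card = r + t := by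
    rw [Finset.card_univ, Fintype.card_fin]
  -- every color class is disconnected somewhere
  have hN1 : ∀ (c : Fin (r + t)) (x : V), ∃ y, ¬ MonoConn E χ c x y := by
    intro c x
    by_contra h
    push_neg at h
    exact hcov ⟨fun _ => (c, x), fun v => ⟨⟨0, by omega⟩, h v⟩⟩
  -- for any t+1 component pointers there is a vertex avoiding all of them
  have hF2 : ∀ f : Fin (t + 1) → Fin (r + t) × V,
      ∃ y, ∀ i, ¬ MonoConn E χ (f i).1 (f i).2 y := by
    intro f
    by_contra h
    push_neg at h
    exact hcov ⟨f, h⟩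
  -- in every class, a vertex avoiding a given component can be found
  have hsplit : ∀ (c : Fin (r + t)) (u : V) (i : Fin r),
      ∃ y, part y = i ∧ ¬ MonoConn E χ c u y := by
    intro c u i
    obtain ⟨w, hw⟩ := hN1 c u
    obtain ⟨e, he, hc, hwe⟩ := hs w c
    obtain ⟨y, hye, hyi⟩ := edge_mem_class he i
    refine ⟨y, hyi, fun hm => hw ?_⟩
    exact hm.trans (mono_symm E χ c (mono_edge he hc hwe hye))
  -- any two vertices in different classes disagree in at most t+1 colors
  have hL1 : ∀ a b : V, part a ≠ part b → (badSet E χ a b).card ≤ t + 1 := by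
    intro a b hab
    by_contra hgt
    push_neg at hgt
    have hbadle : (badSet E χ a b).card ≤ r + t := by
      calc (badSet E χ a b).card ≤ _ := Finset.card_le_card (Finset.subset_univ _)
      _ = r + t := hcuniv
    refine build part χ hsplit a (r + t) (Finset.univ \ badSet E χ a b) {part a, part b}
      (fun i => if i = part a then a else if i = part b then b
        else Classical.choose (hne i)) ?_ ?_ ?_ ?_ ?_ ?_
    · calc _ ≤ (Finset.univ : Finset (Fin (r + t))).card :=
            Finset.card_le_card (Finset.subset_univ _)
      _ = r + t := hcuniv
    · intro i
      by_cases h1 : i = part a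
      · rw [if_pos h1]; exact h1.symm
      · rw [if_neg h1]
        by_cases h2 : i = part b
        · rw [if_pos h2]; exact h2.symm
        · rw [if_neg h2]; exact Classical.choose_spec (hne i)
    · rw [if_pos rfl]
    · exact Finset.mem_insert_self _ _
    · intro c hc
      have hcB : c ∈ badSet E χ a b := by
        by_contra hcB
        exact hc (Finset.mem_sdiff.mpr ⟨Finset.mem_univ _, hcB⟩)
      refine ⟨part b, Finset.mem_insert_of_mem (Finset.mem_singleton_self _), ?_⟩
      rw [if_neg (fun h => hab h.symm), if_pos rfl]
      exact mem_badSet.mp hcB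
    · have h1 : (Finset.univ \ badSet E χ a b).card = (r + t) - (badSet E χ a b).card := by
        rw [Finset.card_sdiff_of_subset (Finset.subset_univ _), hcuniv]
      have h2 : ({part a, part b} : Finset (Fin r)).card ≤ 2 := by
        calc _ ≤ _ := Finset.card_insert_le _ _
        _ = 2 := by rw [Finset.card_singleton]
      omega
  by_cases hall : ∀ a b : V, part a ≠ part b → (badSet E χ a b).card ≤ t
  · -- everyone close: direct cover by t+1 components of a base vertex
    obtain ⟨u, hu⟩ := hne ⟨0, by omega⟩
    obtain ⟨v, hv⟩ := hne ⟨1, by omega⟩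
    have huv : part u ≠ part v := by
      rw [hu, hv]
      simp [Fin.ext_iff]
    have hGcard : t + 1 ≤ (Finset.univ \ badSet E χ u v).card := by
      have h1 : (Finset.univ \ badSet E χ u v).card = (r + t) - (badSet E χ u v).card := by
        rw [Finset.card_sdiff_of_subset (Finset.subset_univ _), hcuniv]
      have h2 := hall u v huv
      omega
    obtain ⟨T, hTG, hTcard⟩ := Finset.exists_subset_card_eq hGcard
    set ι := T.orderIsoOfFin hTcard with hι_def
    refine hcov ⟨fun i => ((ι i : Fin (r + t)), u), fun x => ?_⟩
    by_cases hx : part x = part u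
    · have hvx : part v ≠ part x := fun h => huv (h.trans hx).symm
      have hnotsub : ¬ (T ⊆ badSet E χ v x) := by
        intro hsub
        have := Finset.card_le_card hsub
        have := hall v x hvx
        omega
      obtain ⟨c, hcT, hcB⟩ := Finset.not_subset.mp hnotsub
      refine ⟨ι.symm ⟨c, hcT⟩, ?_⟩
      simp only [OrderIso.apply_symm_apply]
      have h1 : MonoConn E χ c u v :=
        mono_of_not_mem_badSet (Finset.mem_sdiff.mp (hTG hcT)).2
      have h2 : MonoConn E χ c v x := mono_of_not_mem_badSet hcB
      exact h1.trans h2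
    · have hnotsub : ¬ (T ⊆ badSet E χ u x) := by
        intro hsub
        have := Finset.card_le_card hsub
        have := hall u x (fun h => hx h.symm)
        omega
      obtain ⟨c, hcT, hcB⟩ := Finset.not_subset.mp hnotsub
      refine ⟨ι.symm ⟨c, hcT⟩, ?_⟩
      simp only [OrderIso.apply_symm_apply]
      exact mono_of_not_mem_badSet hcB
  · -- there is a pair at distance exactly t+1
    push_neg at hall
    obtain ⟨u, v, huv, hbig⟩ := hall
    set D := badSet E χ u v with hD_def
    have hDcard : D.card = t + 1 := le_antisymm (hL1 u v huv) hbig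
    have hDmono : ∀ c, c ∈ D → ¬ MonoConn E χ c u v := fun c hc => mem_badSet.mp hc
    have hGcard : t + 1 ≤ (Finset.univ \ D).card := by
      have h1 : (Finset.univ \ D).card = (r + t) - D.card := by
        rw [Finset.card_sdiff_of_subset (Finset.subset_univ _), hcuniv]
      omega
    obtain ⟨T, hTG, hTcard⟩ := Finset.exists_subset_card_eq hGcard
    have hDT : ∀ c ∈ T, c ∉ D := fun c hc => (Finset.mem_sdiff.mp (hTG hc)).2
    have hTmono : ∀ c ∈ T, MonoConn E χ c u v := fun c hc =>
      mono_of_not_mem_badSet (hDT c hc)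
    have hdisj : Disjoint D T := Finset.disjoint_left.mpr fun c hcD hcT => hDT c hcT hcD
    have hDTcard : (D ∪ T).card = 2 * t + 2 := by
      rw [Finset.card_union_of_disjoint hdisj, hDcard, hTcard]; ring
    -- hub contradiction: a same-class pair disagreeing in all of D ∪ T
    have hhub : ∀ a b : V, part a = part b →
        (∀ c ∈ D ∪ T, ¬ MonoConn E χ c a b) → False := by
      intro a b hab hW
      set j := part a with hj_def
      set c0 : Fin (r + t) := ⟨0, by omega⟩ with hc0_def
      have key : ∀ x, part x ≠ j → MonoConn E χ c0 a x ∨ MonoConn E χ c0 b x := by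
        intro x hx
        have h1 : (badSet E χ a x).card ≤ t + 1 := hL1 a x (fun h => hx h.symm)
        have h2 : (badSet E χ b x).card ≤ t + 1 :=
          hL1 b x (fun h => hx (h.symm.trans hab.symm))
        have hsub : D ∪ T ⊆ badSet E χ a x ∪ badSet E χ b x := by
          intro c hc
          by_contra hn
          rw [Finset.mem_union, not_or] at hn
          have hax := mono_of_not_mem_badSet hn.1
          have hbx := mono_of_not_mem_badSet hn.2
          exact hW c hc (hax.trans (mono_symm E χ c hbx))
        have hub : 2 * t + 2 ≤ (badSet E χ a x ∪ badSet E χ b x).card := by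
          rw [← hDTcard]; exact Finset.card_le_card hsub
        have hicard := Finset.card_union_add_card_inter (badSet E χ a x) (badSet E χ b x)
        have hint : (badSet E χ a x ∩ badSet E χ b x).card = 0 := by omega
        have hempt : badSet E χ a x ∩ badSet E χ b x = ∅ := Finset.card_eq_zero.mp hint
        by_cases hc0a : c0 ∈ badSet E χ a x
        · right
          apply mono_of_not_mem_badSet
          intro hc0b
          have : c0 ∈ badSet E χ a x ∩ badSet E χ b x := Finset.mem_inter.mpr ⟨hc0a, hc0b⟩
          rw [hempt] at this
          exact absurd this (Finset.notMem_empty _)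
        · left; exact mono_of_not_mem_badSet hc0a
      have cover : ∀ x, MonoConn E χ c0 a x ∨ MonoConn E χ c0 b x := by
        intro x
        by_cases hx : part x = j
        · obtain ⟨e, he, hec, hxe⟩ := hs x c0
          obtain ⟨i1, hi1⟩ : ∃ i1 : Fin r, i1 ≠ j := by
            refine ⟨if h : (j : ℕ) = 0 then ⟨1, by omega⟩ else ⟨0, by omega⟩, ?_⟩
            split_ifs with h
            · simp only [ne_eq, Fin.ext_iff]; omega
            · simp only [ne_eq, Fin.ext_iff]; omega
          obtain ⟨w, hwe, hwi⟩ := edge_mem_class he i1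
          have hxw : MonoConn E χ c0 x w := mono_edge he hec hxe hwe
          have hwj : part w ≠ j := by rw [hwi]; exact hi1
          rcases key w hwj with h | h
          · exact Or.inl (h.trans (mono_symm E χ c0 hxw))
          · exact Or.inr (h.trans (mono_symm E χ c0 hxw))
        · exact key x hx
      apply hcov
      refine ⟨fun i => if i = ⟨0, by omega⟩ then (c0, a) else (c0, b), fun x => ?_⟩
      rcases cover x with h | h
      · refine ⟨⟨0, by omega⟩, ?_⟩
        dsimp only
        rw [if_pos rfl]
        exact h
      · refine ⟨⟨1, by omega⟩, ?_⟩
        dsimp only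
        rw [if_neg (by simp [Fin.ext_iff])]
        exact h
    -- three-vertex build contradiction
    have hbuild3 : ∀ z₁ w₁ : V, part z₁ ≠ part u → part w₁ ≠ part u → part w₁ ≠ part z₁ →
        (∀ c ∈ T, ¬ MonoConn E χ c u z₁) → (∀ c ∈ D, ¬ MonoConn E χ c u w₁) → False := by
      intro z₁ w₁ h1 h2 h3 hTz hDw
      refine build part χ hsplit u (r + t) (Finset.univ \ (D ∪ T))
        {part u, part z₁, part w₁}
        (fun i => if i = part u then u else if i = part z₁ then z₁
          else if i = part w₁ then w₁ else Classical.choose (hne i)) ?_ ?_ ?_ ?_ ?_ ?_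
      · calc _ ≤ (Finset.univ : Finset (Fin (r + t))).card :=
              Finset.card_le_card (Finset.subset_univ _)
        _ = r + t := hcuniv
      · intro i
        by_cases ha : i = part u
        · rw [if_pos ha]; exact ha.symm
        · rw [if_neg ha]
          by_cases hb : i = part z₁
          · rw [if_pos hb]; exact hb.symm
          · rw [if_neg hb]
            by_cases hcc : i = part w₁
            · rw [if_pos hcc]; exact hcc.symm
            · rw [if_neg hcc]; exact Classical.choose_spec (hne i)
      · rw [if_pos rfl]
      · exact Finset.mem_insert_self _ _
      · intro c hc
        have hcDT : c ∈ D ∪ T := by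
          by_contra hcn
          exact hc (Finset.mem_sdiff.mpr ⟨Finset.mem_univ _, hcn⟩)
        rcases Finset.mem_union.mp hcDT with hcD | hcT
        · refine ⟨part w₁, ?_, ?_⟩
          · simp [Finset.mem_insert]
          · rw [if_neg h2, if_neg h3, if_pos rfl]
            exact hDw c hcD
        · refine ⟨part z₁, ?_, ?_⟩
          · simp [Finset.mem_insert]
          · rw [if_neg h1, if_pos rfl]
            exact hTz c hcT
      · have hc1 : (Finset.univ \ (D ∪ T)).card = (r + t) - (2 * t + 2) := by
          rw [Finset.card_sdiff_of_subset (Finset.subset_univ _), hcuniv, hDTcard]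
        have hc2 : ({part u, part z₁, part w₁} : Finset (Fin r)).card ≤ 3 := by
          calc _ ≤ ({part z₁, part w₁} : Finset (Fin r)).card + 1 :=
                Finset.card_insert_le _ _
          _ ≤ (({part w₁} : Finset (Fin r)).card + 1) + 1 := by
                have := Finset.card_insert_le (part z₁) ({part w₁} : Finset (Fin r))
                omega
          _ = 3 := by rw [Finset.card_singleton]
        have hDTle : 2 * t + 2 ≤ r + t := by omega
        omega
    -- get the witness z avoiding u's components on T
    set ιT := T.orderIsoOfFin hTcard with hιT_def
    obtain ⟨z, hz⟩ := hF2 (fun i => ((ιT i : Fin (r + t)), u))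
    have hzT : ∀ c ∈ T, ¬ MonoConn E χ c u z := by
      intro c hc
      have := hz (ιT.symm ⟨c, hc⟩)
      simpa only [OrderIso.apply_symm_apply] using this
    by_cases hz1 : part z = part u
    · -- hub (u, z)
      have hvz : part v ≠ part z := fun h => huv ((h.trans hz1).symm)
      have hTsub : T ⊆ badSet E χ v z := by
        intro c hc
        rw [mem_badSet]
        intro hm
        exact hzT c hc ((hTmono c hc).trans hm)
      have hTeq : T = badSet E χ v z :=
        Finset.eq_of_subset_of_card_le hTsub (by rw [hTcard]; exact hL1 v z hvz)
      apply hhub u z hz1.symm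
      intro c hc
      rcases Finset.mem_union.mp hc with hcD | hcT
      · have hvzc : MonoConn E χ c v z := by
          apply mono_of_not_mem_badSet
          rw [← hTeq]
          exact fun hcT => hDT c hcT hcD
        intro hm
        exact hDmono c hcD (hm.trans (mono_symm E χ c hvzc))
      · exact hzT c hcT
    · by_cases hz2 : part z = part v
      · -- Bad(u,z) = T, so u ~ z on D
        have huz : part u ≠ part z := fun h => huv (h.trans hz2)
        have hTsub : T ⊆ badSet E χ u z := fun c hc => mem_badSet.mpr (hzT c hc)
        have hTeq : T = badSet E χ u z :=
          Finset.eq_of_subset_of_card_le hTsub (by rw [hTcard]; exact hL1 u z huz)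
        have hDz : ∀ c ∈ D, MonoConn E χ c u z := by
          intro c hc
          apply mono_of_not_mem_badSet
          rw [← hTeq]
          exact fun hcT => hDT c hcT hc
        set ιD := D.orderIsoOfFin hDcard with hιD_def
        obtain ⟨w, hw⟩ := hF2 (fun i => ((ιD i : Fin (r + t)), u))
        have hwD : ∀ c ∈ D, ¬ MonoConn E χ c u w := by
          intro c hc
          have := hw (ιD.symm ⟨c, hc⟩)
          simpa only [OrderIso.apply_symm_apply] using this
        by_cases hw1 : part w = part u
        · -- hub (u, w)
          have hzw : part z ≠ part w := by rw [hz2, hw1]; exact huv.symm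
          have hDsub : D ⊆ badSet E χ z w := by
            intro c hc
            rw [mem_badSet]
            intro hm
            exact hwD c hc ((hDz c hc).trans hm)
          have hDeq : D = badSet E χ z w :=
            Finset.eq_of_subset_of_card_le hDsub (by rw [hDcard]; exact hL1 z w hzw)
          apply hhub u w hw1.symm
          intro c hc
          rcases Finset.mem_union.mp hc with hcD | hcT
          · exact hwD c hcD
          · have hzwc : MonoConn E χ c z w := by
              apply mono_of_not_mem_badSet
              rw [← hDeq]
              exact fun hcD => hDT c hcT hcD
            intro hm
            exact hzT c hcT (hm.trans (mono_symm E χ c hzwc))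
        · by_cases hw2 : part w = part v
          · -- hub (z, w)
            have huw : part u ≠ part w := fun h => hw1 h.symm
            have hDsub : D ⊆ badSet E χ u w := fun c hc => mem_badSet.mpr (hwD c hc)
            have hDeq : D = badSet E χ u w :=
              Finset.eq_of_subset_of_card_le hDsub (by rw [hDcard]; exact hL1 u w huw)
            have hTw : ∀ c ∈ T, MonoConn E χ c u w := by
              intro c hc
              apply mono_of_not_mem_badSet
              rw [← hDeq]
              exact fun hcD => hDT c hc hcD
            apply hhub z w (hz2.trans hw2.symm)
            intro c hc
            rcases Finset.mem_union.mp hc with hcD | hcT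
            · intro hm
              exact hwD c hcD ((hDz c hcD).trans hm)
            · intro hm
              exact hzT c hcT ((hTw c hcT).trans (mono_symm E χ c hm))
          · -- w in a third class
            exact hbuild3 z w hz1 hw1 (fun h => hw2 (h.trans hz2)) hzT hwD
      · -- z in a third class, use v as the D-witness
        exact hbuild3 z v hz1 huv.symm (fun h => hz2 h.symm) hzT hDmono
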